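/- Let 0 < q < 1. The family of elements (x x*)^k x^l with k ≥ 0 and l ∈ ℤ, where x^{−m} denotes (x*)^m for m > 0, is a vector space basis of the ℂ-vector space P(D_q). -/

import Mathlib

noncomputable section

/-- The free algebra ℂ⟨x, x*⟩ on two generators (generator 0 is `x`, generator 1 is `x*`). -/
abbrev FreeDisc : Type := FreeAlgebra ℂ (Fin 2)

/-- The defining relation of the quantum disc: x* x = q x x* + (1 - q)·1. -/
def discRel (q : ℝ) : FreeDisc → FreeDisc → Prop := fun a b =>
  a = FreeAlgebra.ι ℂ (1 : Fin 2) * FreeAlgebra.ι ℂ (0 : Fin 2) ∧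
  b = (q : ℂ) • (FreeAlgebra.ι ℂ (0 : Fin 2) * FreeAlgebra.ι ℂ (1 : Fin 2)) +
      ((1 : ℂ) - (q : ℂ)) • 1

/-- The polynomial quantum disc algebra P(D_q). -/
abbrev QDisc (q : ℝ) : Type := RingQuot (discRel q)

/-- The generator x of P(D_q). -/
def xq (q : ℝ) : QDisc q := RingQuot.mkAlgHom ℂ (discRel q) (FreeAlgebra.ι ℂ 0)

/-- The generator x* of P(D_q). -/
def xsq (q : ℝ) : QDisc q := RingQuot.mkAlgHom ℂ (discRel q) (FreeAlgebra.ι ℂ 1)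

/-- The power x^l for l ∈ ℤ, with the convention x^{-m} = (x*)^m for m > 0. -/
def xzpow (q : ℝ) (l : ℤ) : QDisc q :=
  if 0 ≤ l then xq q ^ l.toNat else xsq q ^ (-l).toNat

namespace QDiscAux

lemma rel (q : ℝ) : xsq q * xq q = (q:ℂ) • (xq q * xsq q) + ((1:ℂ) - (q:ℂ)) • 1 := by
  have h := RingQuot.mkAlgHom_rel ℂ
    (s := discRel q)
    (x := FreeAlgebra.ι ℂ (1 : Fin 2) * FreeAlgebra.ι ℂ (0 : Fin 2))
    (y := (q : ℂ) • (FreeAlgebra.ι ℂ (0 : Fin 2) * FreeAlgebra.ι ℂ (1 : Fin 2)) +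
      ((1 : ℂ) - (q : ℂ)) • 1)
    ⟨rfl, rfl⟩
  rw [map_add, map_smul, map_smul, map_one, map_mul, map_mul] at h
  exact h

lemma key1 (q : ℝ) (m : ℕ) : xsq q ^ (m+1) * xq q
    = ((q:ℂ)^(m+1)) • (xq q * xsq q * xsq q ^ m) + ((1:ℂ) - (q:ℂ)^(m+1)) • xsq q ^ m := by
  induction m with
  | zero => simpa using rel q
  | succ m ih =>
      have h1 : xsq q ^ (m+1+1) * xq q = xsq q * (xsq q ^ (m+1) * xq q) := by
        rw [pow_succ', mul_assoc]
      rw [h1, ih, mul_add, mul_smul_comm, mul_smul_comm]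
      have h2 : xsq q * (xq q * xsq q * xsq q ^ m) = (xsq q * xq q) * xsq q ^ (m+1) := by
        rw [pow_succ']; simp only [mul_assoc]
      have h3 : xsq q * xsq q ^ m = xsq q ^ (m+1) := (pow_succ' _ _).symm
      rw [h2, h3, rel q, add_mul, smul_mul_assoc, smul_mul_assoc, one_mul]
      match_scalars <;> ring

lemma xsxq (q : ℝ) (m : ℕ) : xsq q * xq q ^ (m+1)
    = (q:ℂ) • (xq q * xsq q * xq q ^ m) + ((1:ℂ) - (q:ℂ)) • xq q ^ m := by
  have : xsq q * xq q ^ (m+1) = (xsq q * xq q) * xq q ^ m := by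
    rw [pow_succ', ← mul_assoc]
  rw [this, rel q, add_mul, smul_mul_assoc, smul_mul_assoc, one_mul, mul_assoc]

lemma qxxs (q : ℝ) : (q:ℂ) • (xq q * xsq q) = xsq q * xq q + ((q:ℂ) - 1) • 1 := by
  rw [rel q]; match_scalars <;> ring

lemma key2 (q : ℝ) (m : ℕ) : (q:ℂ)^(m+1) • (xq q ^ (m+1) * xsq q)
    = xsq q * xq q ^ (m+1) + ((q:ℂ)^(m+1) - 1) • xq q ^ m := by
  induction m with
  | zero =>
      simp only [zero_add, pow_one, pow_zero]
      rw [rel q]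
      match_scalars <;> ring
  | succ m ih =>
      have e1 : xq q ^ (m+1+1) * xsq q = xq q ^ (m+1) * (xq q * xsq q) := by
        rw [pow_succ, mul_assoc]
      calc (q:ℂ)^(m+1+1) • (xq q ^ (m+1+1) * xsq q)
          = (q:ℂ)^(m+1) • (xq q ^ (m+1) * ((q:ℂ) • (xq q * xsq q))) := by
            rw [e1, mul_smul_comm, smul_smul, pow_succ]
        _ = ((q:ℂ)^(m+1) • (xq q ^ (m+1) * xsq q)) * xq q
              + ((q:ℂ)^(m+1+1) - (q:ℂ)^(m+1)) • xq q ^ (m+1) := by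
            rw [qxxs q]
            simp only [mul_add, smul_add, mul_smul_comm, mul_one, smul_smul,
              smul_mul_assoc, ← mul_assoc]
            match_scalars <;> ring
        _ = (xsq q * xq q ^ (m+1) + ((q:ℂ)^(m+1) - 1) • xq q ^ m) * xq q
              + ((q:ℂ)^(m+1+1) - (q:ℂ)^(m+1)) • xq q ^ (m+1) := by rw [ih]
        _ = xsq q * xq q ^ (m+1+1) + ((q:ℂ)^(m+1+1) - 1) • xq q ^ (m+1) := by
            simp only [add_mul, smul_mul_assoc, mul_assoc, ← pow_succ]
            match_scalars <;> ring

def vv (q : ℝ) : ℕ × ℤ → QDisc q := fun kl => (xq q * xsq q) ^ kl.1 * xzpow q kl.2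

def SS (q : ℝ) : Submodule ℂ (QDisc q) := Submodule.span ℂ (Set.range (vv q))

lemma mem_vv (q : ℝ) (k : ℕ) (l : ℤ) : vv q (k, l) ∈ SS q :=
  Submodule.subset_span ⟨(k, l), rfl⟩

lemma xzpow_nonneg (q : ℝ) {l : ℤ} (h : 0 ≤ l) : xzpow q l = xq q ^ l.toNat := if_pos h

lemma xzpow_nonpos (q : ℝ) {l : ℤ} (h : l ≤ 0) : xzpow q l = xsq q ^ (-l).toNat := by
  rcases eq_or_lt_of_le h with h0 | h0
  · subst h0; simp [xzpow]
  · exact if_neg (not_le.mpr h0)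

lemma vv_mul_x (q : ℝ) (hq0 : 0 < q) (k : ℕ) (l : ℤ) : vv q (k, l) * xq q ∈ SS q := by
  rcases le_or_gt 0 l with hl | hl
  · have : vv q (k, l) * xq q = vv q (k, l + 1) := by
      have h1 : (l + 1).toNat = l.toNat + 1 := by omega
      rw [vv, vv, xzpow_nonneg q hl, xzpow_nonneg q (by omega), h1, mul_assoc, pow_succ]
    rw [this]; exact mem_vv q k (l + 1)
  · -- l < 0; write (-l).toNat = m + 1
    obtain ⟨m, hm⟩ : ∃ m, (-l).toNat = m + 1 := ⟨(-l).toNat - 1, by omega⟩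
    have hml : (-(l + 1)).toNat = m := by omega
    have : vv q (k, l) * xq q
        = ((q:ℂ)^(m+1)) • vv q (k + 1, l + 1) + ((1:ℂ) - (q:ℂ)^(m+1)) • vv q (k, l + 1) := by
      simp only [vv]
      rw [xzpow_nonpos q hl.le, xzpow_nonpos q (by omega), hm, hml,
        mul_assoc, key1 q m]
      simp only [pow_succ, mul_add, mul_smul_comm, mul_assoc]
    rw [this]
    exact Submodule.add_mem _ (Submodule.smul_mem _ _ (mem_vv q _ _))
      (Submodule.smul_mem _ _ (mem_vv q _ _))

lemma vv_mul_xs (q : ℝ) (hq0 : 0 < q) (k : ℕ) (l : ℤ) : vv q (k, l) * xsq q ∈ SS q := by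
  rcases le_or_gt l 0 with hl | hl
  · have : vv q (k, l) * xsq q = vv q (k, l - 1) := by
      have h1 : (-(l - 1)).toNat = (-l).toNat + 1 := by omega
      rw [vv, vv, xzpow_nonpos q hl, xzpow_nonpos q (by omega), h1, mul_assoc, pow_succ]
    rw [this]; exact mem_vv q k (l - 1)
  · -- l > 0; l = m + 1
    obtain ⟨m, hm⟩ : ∃ m : ℕ, l.toNat = m + 1 := ⟨l.toNat - 1, by omega⟩
    have hml : (l - 1).toNat = m := by omega
    have hq : ((q:ℂ)^(m+1)) ≠ 0 := pow_ne_zero _ (by exact_mod_cast hq0.ne')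
    have key : ((q:ℂ)^(m+1)) • (vv q (k, l) * xsq q)
        = (q:ℂ) • vv q (k + 1, l - 1) + ((q:ℂ)^(m+1) - (q:ℂ)) • vv q (k, l - 1) := by
      simp only [vv]
      rw [xzpow_nonneg q hl.le, xzpow_nonneg q (by omega), hm, hml,
        mul_assoc, ← mul_smul_comm, key2 q m, xsxq q m]
      simp only [pow_succ, mul_add, mul_smul_comm, smul_add, smul_smul, mul_assoc]
      match_scalars <;> ring
    have : vv q (k, l) * xsq q = ((q:ℂ)^(m+1))⁻¹ • ((q:ℂ) • vv q (k + 1, l - 1)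
        + ((q:ℂ)^(m+1) - (q:ℂ)) • vv q (k, l - 1)) := by
      rw [← key, inv_smul_smul₀ hq]
    rw [this]
    exact Submodule.smul_mem _ _ (Submodule.add_mem _
      (Submodule.smul_mem _ _ (mem_vv q _ _)) (Submodule.smul_mem _ _ (mem_vv q _ _)))

lemma mul_x_mem (q : ℝ) (hq0 : 0 < q) {s : QDisc q} (hs : s ∈ SS q) : s * xq q ∈ SS q := by
  induction hs using Submodule.span_induction with
  | mem x hx => obtain ⟨⟨k, l⟩, rfl⟩ := hx; exact vv_mul_x q hq0 k l
  | zero => rw [zero_mul]; exact Submodule.zero_mem _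
  | add x y _ _ hx hy => rw [add_mul]; exact Submodule.add_mem _ hx hy
  | smul a x _ hx => rw [smul_mul_assoc]; exact Submodule.smul_mem _ _ hx

lemma mul_xs_mem (q : ℝ) (hq0 : 0 < q) {s : QDisc q} (hs : s ∈ SS q) : s * xsq q ∈ SS q := by
  induction hs using Submodule.span_induction with
  | mem x hx => obtain ⟨⟨k, l⟩, rfl⟩ := hx; exact vv_mul_xs q hq0 k l
  | zero => rw [zero_mul]; exact Submodule.zero_mem _
  | add x y _ _ hx hy => rw [add_mul]; exact Submodule.add_mem _ hx hy
  | smul a x _ hx => rw [smul_mul_assoc]; exact Submodule.smul_mem _ _ hx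

lemma one_mem (q : ℝ) : (1 : QDisc q) ∈ SS q := by
  have : vv q (0, 0) = 1 := by simp [vv, xzpow]
  rw [← this]; exact mem_vv q 0 0

lemma SS_top (q : ℝ) (hq0 : 0 < q) : SS q = ⊤ := by
  rw [eq_top_iff]
  intro a _
  obtain ⟨b, rfl⟩ := RingQuot.mkAlgHom_surjective ℂ (discRel q) a
  have H : ∀ b : FreeDisc, ∀ s ∈ SS q, s * RingQuot.mkAlgHom ℂ (discRel q) b ∈ SS q := by
    intro b
    induction b using FreeAlgebra.induction with
    | grade0 r =>
        intro s hs
        rw [AlgHom.commutes, ← Algebra.commutes, ← Algebra.smul_def]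
        exact Submodule.smul_mem _ _ hs
    | grade1 i =>
        fin_cases i
        · intro s hs; exact mul_x_mem q hq0 hs
        · intro s hs; exact mul_xs_mem q hq0 hs
    | mul a b ha hb =>
        intro s hs
        rw [map_mul, ← mul_assoc]
        exact hb _ (ha _ hs)
    | add a b ha hb =>
        intro s hs
        rw [map_add, mul_add]
        exact Submodule.add_mem _ (ha _ hs) (hb _ hs)
  simpa using H b 1 (one_mem q)

abbrev MM : Type := ℕ →₀ ℂ

def ee (n : ℕ) : MM := Finsupp.single n 1

def Aop : MM →ₗ[ℂ] MM := Finsupp.lmapDomain ℂ ℂ (· + 1)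

def Bop (q : ℝ) : MM →ₗ[ℂ] MM :=
  Finsupp.lsum ℂ fun n => LinearMap.toSpanSingleton ℂ MM
    (Finsupp.single (n - 1) ((1:ℂ) - (q:ℂ)^n))

lemma A_ee (n : ℕ) : Aop (ee n) = ee (n + 1) := by
  simp [Aop, ee, Finsupp.lmapDomain_apply, Finsupp.mapDomain_single]

lemma B_ee (q : ℝ) (n : ℕ) : Bop q (ee n) = ((1:ℂ) - (q:ℂ)^n) • ee (n - 1) := by
  simp [Bop, ee, LinearMap.toSpanSingleton, Finsupp.smul_single]

lemma AB_ee (q : ℝ) (n : ℕ) :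
    (Aop * Bop q) (ee n) = ((1:ℂ) - (q:ℂ)^n) • ee n := by
  rw [Module.End.mul_apply, B_ee, map_smul, A_ee]
  cases n with
  | zero => simp
  | succ n => rfl

lemma ABpow_ee (q : ℝ) (k n : ℕ) :
    ((Aop * Bop q) ^ k) (ee n) = (((1:ℂ) - (q:ℂ)^n) ^ k) • ee n := by
  induction k with
  | zero => simp
  | succ k ih =>
      rw [pow_succ', Module.End.mul_apply, ih, map_smul, AB_ee, smul_smul, pow_succ']
      rw [mul_comm]

lemma Apow_ee (l n : ℕ) : (Aop ^ l) (ee n) = ee (n + l) := by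
  induction l with
  | zero => simp
  | succ l ih =>
      rw [pow_succ', Module.End.mul_apply, ih, A_ee]
      rfl

lemma Bpow_ee (q : ℝ) (m n : ℕ) :
    ((Bop q) ^ m) (ee (n + m))
      = (∏ j ∈ Finset.range m, ((1:ℂ) - (q:ℂ)^(n + j + 1))) • ee n := by
  induction m with
  | zero => simp
  | succ m ih =>
      have h1 : n + (m + 1) - 1 = n + m := by omega
      rw [pow_succ, Module.End.mul_apply, B_ee, h1, map_smul, ih, smul_smul,
        Finset.prod_range_succ]
      congr 1
      ring

def rep (q : ℝ) : QDisc q →ₐ[ℂ] Module.End ℂ MM :=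
  RingQuot.liftAlgHom ℂ ⟨FreeAlgebra.lift ℂ ![Aop, Bop q], by
    rintro a b ⟨rfl, rfl⟩
    simp only [map_mul, map_add, map_smul, map_one, FreeAlgebra.lift_ι_apply,
      Matrix.cons_val_zero, Matrix.cons_val_one, Matrix.head_cons]
    refine Finsupp.lhom_ext fun n c => ?_
    have hc : (Finsupp.single n c : MM) = c • ee n := by simp [ee]
    simp only [hc, map_smul, Module.End.mul_apply, LinearMap.add_apply,
      LinearMap.smul_apply, Module.End.one_apply, A_ee, B_ee]
    rw [smul_smul, smul_smul]
    cases n with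
    | zero => simp; module
    | succ n =>
        simp only [Nat.add_sub_cancel]
        match_scalars <;> ring⟩

lemma rep_x (q : ℝ) : rep q (xq q) = Aop := by
  rw [xq, rep, RingQuot.liftAlgHom_mkAlgHom_apply]
  simp [FreeAlgebra.lift_ι_apply]

lemma rep_xs (q : ℝ) : rep q (xsq q) = Bop q := by
  rw [xsq, rep, RingQuot.liftAlgHom_mkAlgHom_apply]
  simp [FreeAlgebra.lift_ι_apply]

lemma vv_mk (q : ℝ) (k : ℕ) (l : ℤ) : vv q (k, l) = (xq q * xsq q) ^ k * xzpow q l := rfl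

lemma rep_vv (q : ℝ) (hq0 : 0 < q) (hq1 : q < 1) (l : ℤ) (n : ℕ) :
    ∃ u : ℂ, u ≠ 0 ∧ ((-l).toNat ≤ n → ∀ k : ℕ,
      rep q (vv q (k, l)) (ee n)
        = (((1:ℂ) - (q:ℂ)^(((n:ℤ) + l).toNat))^k * u) • ee (((n:ℤ) + l).toNat)) := by
  rcases le_or_gt 0 l with hl | hl
  · refine ⟨1, one_ne_zero, fun hn k => ?_⟩
    have hN : ((n:ℤ) + l).toNat = n + l.toNat := by omega
    rw [vv_mk, xzpow_nonneg q hl, map_mul, map_pow, map_pow, map_mul, rep_x, rep_xs,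
      Module.End.mul_apply, Apow_ee, ABpow_ee, hN, mul_one]
  · by_cases hn' : (-l).toNat ≤ n
    · set m := (-l).toNat with hm
      have hN : ((n:ℤ) + l).toNat = n - m := by omega
      refine ⟨∏ j ∈ Finset.range m, ((1:ℂ) - (q:ℂ)^((n - m) + j + 1)), ?_, fun hn k => ?_⟩
      · rw [Finset.prod_ne_zero_iff]
        intro j hj h
        have h1 : (q:ℝ)^(n - m + j + 1) = 1 := by
          have : (q:ℂ)^(n - m + j + 1) = 1 := by linear_combination -h
          exact_mod_cast this
        have h2 : (q:ℝ)^(n - m + j + 1) < 1 := pow_lt_one₀ hq0.le hq1 (by omega)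
        linarith
      · rw [vv_mk, xzpow_nonpos q hl.le, ← hm, map_mul, map_pow, map_pow, map_mul,
          rep_x, rep_xs, Module.End.mul_apply]
        have hB := Bpow_ee q m (n - m)
        have hnm : n - m + m = n := by omega
        rw [hnm] at hB
        rw [hB, map_smul, ABpow_ee, hN, smul_smul, mul_comm]
    · exact ⟨1, one_ne_zero, fun hn => absurd hn hn'⟩

end QDiscAux

/-- For 0 < q < 1, the elements (x x*)^k x^l, k ≥ 0, l ∈ ℤ (where
x^{-m} = (x*)^m for m > 0) form a vector space basis of P(D_q). -/
theorem qdisc_second_basis (q : ℝ) (hq0 : 0 < q) (hq1 : q < 1) :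
    LinearIndependent ℂ (fun kl : ℕ × ℤ => (xq q * xsq q) ^ kl.1 * xzpow q kl.2) ∧
    Submodule.span ℂ (Set.range fun kl : ℕ × ℤ => (xq q * xsq q) ^ kl.1 * xzpow q kl.2)
      = ⊤ := by
  open QDiscAux in
  constructor
  · rw [linearIndependent_iff]
    intro c hc
    ext p
    obtain ⟨k₀, l₀⟩ := p
    simp only [Finsupp.coe_zero, Pi.zero_apply]
    set K := (c.support.sup fun p => p.1) + k₀ + 1 with hK
    set L := (c.support.sup fun p => p.2.natAbs) + l₀.natAbs + 1 with hL
    set T := Finset.range K ×ˢ Finset.Icc (-(L:ℤ)) (L:ℤ) with hT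
    have hsub : c.support ⊆ T := by
      intro p hp
      have h1 : p.1 ≤ c.support.sup fun p => p.1 := Finset.le_sup hp
      have h2 : p.2.natAbs ≤ c.support.sup fun p => p.2.natAbs :=
        Finset.le_sup (f := fun p : ℕ × ℤ => p.2.natAbs) hp
      simp only [hT, Finset.mem_product, Finset.mem_range, Finset.mem_Icc]
      refine ⟨by omega, by omega, by omega⟩
    have hsum : ∑ p ∈ T, c p • vv q p = 0 := by
      rw [Finsupp.linearCombination_apply, Finsupp.sum] at hc
      rw [← hc]
      exact (Finset.sum_subset hsub (fun p _ hnp => by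
        rw [Finsupp.notMem_support_iff.mp hnp, zero_smul])).symm
    have hex : ∀ (l : ℤ) (n : ℕ), ∃ u : ℂ, u ≠ 0 ∧ ((-l).toNat ≤ n → ∀ k : ℕ,
        rep q (vv q (k, l)) (ee n)
          = (((1:ℂ) - (q:ℂ)^(((n:ℤ) + l).toNat))^k * u) • ee (((n:ℤ) + l).toNat)) :=
      fun l n => rep_vv q hq0 hq1 l n
    choose u hu0 hu using hex
    set P : Polynomial ℂ := ∑ k ∈ Finset.range K, Polynomial.C (c (k, l₀)) * Polynomial.X ^ k
      with hP
    have hroot : ∀ n : ℕ, L ≤ n → P.eval ((1:ℂ) - (q:ℂ)^(((n:ℤ) + l₀).toNat)) = 0 := by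
      intro n hn
      have h0 : (rep q (∑ p ∈ T, c p • vv q p)) (ee n) = 0 := by
        rw [hsum, map_zero, LinearMap.zero_apply]
      rw [map_sum, LinearMap.sum_apply] at h0
      have h0' := congrArg (fun f : MM => f (((n:ℤ) + l₀).toNat)) h0
      simp only [Finsupp.finset_sum_apply, Finsupp.coe_zero, Pi.zero_apply] at h0'
      have h2 : ∑ p ∈ T, c p * ((((1:ℂ) - (q:ℂ)^(((n:ℤ) + p.2).toNat))^p.1 * u p.2 n) *
          (if (((n:ℤ) + p.2).toNat) = (((n:ℤ) + l₀).toNat) then 1 else 0)) = 0 := by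
        have hcongr : ∑ p ∈ T, c p * ((((1:ℂ) - (q:ℂ)^(((n:ℤ) + p.2).toNat))^p.1 * u p.2 n) *
              (if (((n:ℤ) + p.2).toNat) = (((n:ℤ) + l₀).toNat) then 1 else 0))
            = ∑ p ∈ T, ((rep q) (c p • vv q p)) (ee n) (((n:ℤ) + l₀).toNat) := by
          refine Finset.sum_congr rfl fun p hp => ?_
          obtain ⟨k, l⟩ := p
          dsimp only
          have hmem : -(L:ℤ) ≤ l ∧ l ≤ (L:ℤ) := by
            have := (Finset.mem_product.mp hp).2
            simpa [Finset.mem_Icc] using this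
          have hln : (-l).toNat ≤ n := by omega
          rw [map_smul, LinearMap.smul_apply, hu l n hln k, Finsupp.smul_apply,
            Finsupp.smul_apply]
          simp only [ee, Finsupp.single_apply, smul_eq_mul]
        rw [hcongr]
        exact h0'
      rw [hT, Finset.sum_product] at h2
      have h3 : ∀ k ∈ Finset.range K,
          (∑ l ∈ Finset.Icc (-(L:ℤ)) (L:ℤ), c (k, l) *
            ((((1:ℂ) - (q:ℂ)^(((n:ℤ) + l).toNat))^k * u l n) *
              (if (((n:ℤ) + l).toNat) = (((n:ℤ) + l₀).toNat) then 1 else 0)))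
          = c (k, l₀) * ((((1:ℂ) - (q:ℂ)^(((n:ℤ) + l₀).toNat))^k * u l₀ n)) := by
        intro k _
        rw [Finset.sum_eq_single l₀]
        · rw [if_pos rfl, mul_one]
        · intro l hlmem hne
          have hmem : -(L:ℤ) ≤ l ∧ l ≤ (L:ℤ) := by simpa [Finset.mem_Icc] using hlmem
          rw [if_neg (by omega), mul_zero, mul_zero]
        · intro habs
          exact absurd (Finset.mem_Icc.mpr ⟨by omega, by omega⟩) habs
      rw [Finset.sum_congr rfl h3] at h2
      have h4 : (∑ k ∈ Finset.range K,
          c (k, l₀) * ((1:ℂ) - (q:ℂ)^(((n:ℤ) + l₀).toNat))^k) * u l₀ n = 0 := by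
        rw [← h2, Finset.sum_mul]
        exact Finset.sum_congr rfl fun k _ => by ring
      have h5 := (mul_eq_zero.mp h4).resolve_right (hu0 l₀ n)
      rw [hP, Polynomial.eval_finset_sum]
      simpa [Polynomial.eval_mul, Polynomial.eval_pow] using h5
    have hinj : Function.Injective
        (fun j : ℕ => ((1:ℂ) - (q:ℂ)^(((L + j : ℕ) : ℤ) + l₀).toNat)) := by
      intro j1 j2 h
      simp only at h
      have h' : (q:ℂ)^((((L + j1 : ℕ) : ℤ) + l₀).toNat)
          = (q:ℂ)^((((L + j2 : ℕ) : ℤ) + l₀).toNat) := by linear_combination -h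
      have hr : (q:ℝ)^((((L + j1 : ℕ) : ℤ) + l₀).toNat)
          = (q:ℝ)^((((L + j2 : ℕ) : ℤ) + l₀).toNat) := by exact_mod_cast h'
      have he := (pow_right_strictAnti₀ hq0 hq1).injective hr
      omega
    have hPzero : P = 0 := by
      refine Polynomial.eq_zero_of_infinite_isRoot P
        (Set.infinite_of_injective_forall_mem hinj (fun j => ?_))
      have := hroot (L + j) (by omega)
      simpa [Polynomial.IsRoot, Nat.cast_add] using this
    have hc0 := congrArg (fun Q : Polynomial ℂ => Q.coeff k₀) hPzero
    simp only [hP, Polynomial.finset_sum_coeff, Polynomial.coeff_C_mul,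
      Polynomial.coeff_X_pow, Polynomial.coeff_zero, mul_ite, mul_one, mul_zero,
      Finset.sum_ite_eq, Finset.mem_range] at hc0
    have hk₀ : k₀ < K := by omega
    rw [if_pos hk₀] at hc0
    exact hc0
  · exact SS_top q hq0
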